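/- Let m, p be natural numbers, Q₁ a real m×m matrix, Q₂ a real m×p matrix, and Q₄ a real p×p matrix with Q₄ᵀ = Q₄ and Q₄ invertible. Let w ∈ ℝ^p and τ ∈ ℝ, and set c := w ⬝ᵥ (Q₄⁻¹ *ᵥ w). If 1 + τ·c ≠ 0, then the perturbed interior block Q₄ + τ • (w wᵀ) is invertible, and the Kron reduction of the perturbed network satisfies Q₁ - Q₂ * (Q₄ + τ • (w wᵀ))⁻¹ * Q₂ᵀ = Q_red + (τ / (1 + τ·c)) • ((Q_ac *ᵥ w) (Q_ac *ᵥ w)ᵀ), where Q_red = Q₁ - Q₂ * Q₄⁻¹ * Q₂ᵀ and Q_ac = -(Q₂ * Q₄⁻¹). -/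

import Mathlib

open Matrix

section Helpers

set_option linter.unusedSectionVars false

variable {R : Type*} [CommRing R] {m n k : Type*} [Fintype m] [Fintype n] [Fintype k]

lemma mul_vecMulVec' (A : Matrix m n R) (u : n → R) (v : k → R) :
    A * vecMulVec u v = vecMulVec (A *ᵥ u) v := by
  ext i j
  simp [mul_apply, vecMulVec_apply, mulVec, dotProduct, Finset.sum_mul, mul_assoc]

lemma vecMulVec_mul' (u : m → R) (v : n → R) (A : Matrix n k R) :
    vecMulVec u v * A = vecMulVec u (Aᵀ *ᵥ v) := by
  ext i j
  simp [mul_apply, vecMulVec_apply, mulVec, dotProduct, Finset.mul_sum, transpose_apply,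
    mul_assoc, mul_comm, mul_left_comm]

lemma vecMulVec_mul_vecMulVec' (u : m → R) (v x : n → R) (y : k → R) :
    vecMulVec u v * vecMulVec x y = (v ⬝ᵥ x) • vecMulVec u y := by
  ext i j
  simp only [mul_apply, vecMulVec_apply, Matrix.smul_apply, smul_eq_mul, dotProduct, Finset.sum_mul,
    Finset.mul_sum]
  exact Finset.sum_congr rfl fun k _ => by ring

end Helpers

/-- Rank-one Kron-reduction update formula (used in the proof of Lemma 1): perturbing the
interior block `Q₄` by `τ • w wᵀ` yields (provided `1 + τ c ≠ 0`, where
`c = wᵀ Q₄⁻¹ w` is the interior effective resistance) an invertible interior block, and the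
Kron reduction of the perturbed network equals
`Q_red + (τ / (1 + τ c)) • (Q_ac w)(Q_ac w)ᵀ`, with `Q_red = Q₁ - Q₂ Q₄⁻¹ Q₂ᵀ` and
`Q_ac = -Q₂ Q₄⁻¹`. -/
theorem kron_reduction_rank_one_update {m p : ℕ}
    (Q1 : Matrix (Fin m) (Fin m) ℝ) (Q2 : Matrix (Fin m) (Fin p) ℝ)
    (Q4 : Matrix (Fin p) (Fin p) ℝ) (hQ4sym : Q4ᵀ = Q4) (hQ4 : IsUnit Q4.det)
    (w : Fin p → ℝ) (τ : ℝ)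
    (h : 1 + τ * (w ⬝ᵥ (Q4⁻¹ *ᵥ w)) ≠ 0) :
    IsUnit (Q4 + τ • vecMulVec w w).det ∧
      Q1 - Q2 * (Q4 + τ • vecMulVec w w)⁻¹ * Q2ᵀ =
        (Q1 - Q2 * Q4⁻¹ * Q2ᵀ) +
          (τ / (1 + τ * (w ⬝ᵥ (Q4⁻¹ *ᵥ w)))) •
            vecMulVec ((-(Q2 * Q4⁻¹)) *ᵥ w) ((-(Q2 * Q4⁻¹)) *ᵥ w) := by
  set c : ℝ := w ⬝ᵥ (Q4⁻¹ *ᵥ w) with hc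
  set d : ℝ := 1 + τ * c with hd
  set s : ℝ := τ / d with hs
  set g : Fin p → ℝ := Q4⁻¹ *ᵥ w with hg
  set B : Matrix (Fin p) (Fin p) ℝ := Q4 + τ • vecMulVec w w with hB
  set M : Matrix (Fin p) (Fin p) ℝ := Q4⁻¹ - s • vecMulVec g g with hM
  have hQ4invsym : Q4⁻¹ᵀ = Q4⁻¹ := by
    rw [transpose_nonsing_inv, hQ4sym]
  have hQ4g : Q4 *ᵥ g = w := by
    rw [hg, mulVec_mulVec, mul_nonsing_inv _ hQ4, one_mulVec]
  have hcoef : τ - s - τ * s * c = 0 := by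
    have hsd : s * d = τ := div_mul_cancel₀ τ h
    rw [hd] at hsd
    nlinarith [hsd]
  have hBM : B * M = 1 := by
    rw [hB, hM]
    rw [add_mul, Matrix.mul_sub, Matrix.mul_sub, mul_nonsing_inv _ hQ4, smul_mul_assoc,
      smul_mul_assoc, mul_smul_comm, mul_smul_comm, mul_vecMulVec', hQ4g, vecMulVec_mul',
      hQ4invsym, ← hg, vecMulVec_mul_vecMulVec', ← hc]
    set V := vecMulVec w g with hV
    have key : (1 : Matrix (Fin p) (Fin p) ℝ) - s • V + (τ • V - τ • s • c • V)
        = 1 + (τ - s - τ * s * c) • V := by module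
    calc (1 : Matrix (Fin p) (Fin p) ℝ) - s • V + (τ • V - τ • s • c • V)
        = 1 + (τ - s - τ * s * c) • V := key
      _ = 1 := by rw [hcoef, zero_smul, add_zero]
  have hMB : M * B = 1 := by
    rw [hM, hB]
    rw [Matrix.sub_mul, Matrix.mul_add, Matrix.mul_add, nonsing_inv_mul _ hQ4, smul_mul_assoc,
      smul_mul_assoc, mul_smul_comm, mul_smul_comm, mul_vecMulVec', ← hg, vecMulVec_mul',
      hQ4sym, hQ4g, vecMulVec_mul_vecMulVec']
    have hgw : g ⬝ᵥ w = c := by rw [hg, hc, dotProduct_comm]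
    rw [hgw]
    set V := vecMulVec g w with hV
    have key : (1 : Matrix (Fin p) (Fin p) ℝ) + τ • V - (s • V + s • τ • c • V)
        = 1 + (τ - s - τ * s * c) • V := by module
    calc (1 : Matrix (Fin p) (Fin p) ℝ) + τ • V - (s • V + s • τ • c • V)
        = 1 + (τ - s - τ * s * c) • V := key
      _ = 1 := by rw [hcoef, zero_smul, add_zero]
  have hdetB : IsUnit B.det := by
    have := congrArg Matrix.det hBM
    rw [det_mul, det_one] at this
    exact IsUnit.of_mul_eq_one _ this
  refine ⟨hdetB, ?_⟩
  have hBinv : B⁻¹ = M := inv_eq_right_inv hBM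
  rw [hBinv, hM]
  rw [Matrix.mul_sub, Matrix.sub_mul, Matrix.mul_smul, Matrix.smul_mul, mul_vecMulVec',
    vecMulVec_mul']
  have hvv : vecMulVec ((-(Q2 * Q4⁻¹)) *ᵥ w) ((-(Q2 * Q4⁻¹)) *ᵥ w)
      = vecMulVec (Q2 *ᵥ g) (Q2ᵀᵀ *ᵥ g) := by
    rw [neg_mulVec, ← mulVec_mulVec, ← hg, transpose_transpose]
    ext i j
    simp [vecMulVec_apply]
  rw [hvv]
  abel
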